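/- If r is the Gauss remainder of nonzero a, b ∈ ℤ[i], if r ≠ 0, and if v₂(r) ≤ v₂(b), then φ(r) < φ(b). -/

import Mathlib

open GaussianInt

noncomputable section

/-- The sequence w: w_{2k} = 3·2^k, w_{2k+1} = 4·2^k. -/
def w (n : ℕ) : ℤ := if n % 2 = 0 then 3 * 2 ^ (n / 2) else 4 * 2 ^ (n / 2)

/-- 2-adic valuation of gcd(Re z, Im z). -/
def v2 (z : GaussianInt) : ℕ := padicValNat 2 (Int.gcd z.re z.im)

/-- ℓ₁ norm. -/
def l1 (z : GaussianInt) : ℤ := |z.re| + |z.im|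

/-- ℓ∞ norm. -/
def linf (z : GaussianInt) : ℤ := max |z.re| |z.im|

/-- m(z) = min(|Re z|, |Im z|). -/
def mm (z : GaussianInt) : ℤ := min |z.re| |z.im|

/-- The algebraic norm. -/
def Nm (z : GaussianInt) : ℤ := z.re ^ 2 + z.im ^ 2

/-- Graves' formula for the minimal Euclidean function φ on ℤ[i]. -/
def phi (z : GaussianInt) : ℕ :=
  let j := v2 z
  let n := sInf {n : ℕ | |z.re| ≤ 2 ^ j * (w n - 2) ∧ |z.im| ≤ 2 ^ j * (w n - 2)}
  if l1 z ≤ 2 ^ j * (w (n + 1) - 3) then n + 2 * j else n + 2 * j + 1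

/-- Nearest integer, rounding halves down. -/
def nint (x : ℚ) : ℤ := if x - ⌊x⌋ ≤ 1 / 2 then ⌊x⌋ else ⌈x⌉

/-- Gauss quotient: coordinatewise nearest-integer rounding of a·conj(b)/Nm(b). -/
def gq (a b : GaussianInt) : GaussianInt :=
  ⟨nint (((a.re * b.re + a.im * b.im : ℤ) : ℚ) / ((b.re ^ 2 + b.im ^ 2 : ℤ) : ℚ)),
   nint (((a.im * b.re - a.re * b.im : ℤ) : ℚ) / ((b.re ^ 2 + b.im ^ 2 : ℤ) : ℚ))⟩

/-- Gauss remainder. -/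
def gr (a b : GaussianInt) : GaussianInt := a - gq a b * b

/-- The imaginary unit in ℤ[i]. -/
def Ii : GaussianInt := ⟨0, 1⟩

/-- The canonical unit u_z. -/
def uz (z : GaussianInt) : GaussianInt :=
  if |z.re| > |z.im| then (if 0 < z.re then 1 else -1)
  else if |z.im| > |z.re| then (if 0 < z.im then -Ii else Ii)
  else if 0 < z.re then (if 0 < z.im then 1 else Ii)
  else (if 0 < z.im then -Ii else -1)

/-- s(z) = sgn(Im(u_z·z)). -/
def sfun (z : GaussianInt) : ℤ := Int.sign ((uz z * z).im)




set_option maxHeartbeats 1000000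



lemma w0 : w 0 = 3 := rfl
lemma w1 : w 1 = 4 := rfl

lemma two_pow_pos' (t : ℕ) : (0:ℤ) < 2 ^ t := pow_pos (by norm_num) t
lemma one_le_two_pow' (t : ℕ) : (1:ℤ) ≤ 2 ^ t := two_pow_pos' t

lemma w_two_mul (n : ℕ) : w (n + 2) = 2 * w n := by
  have h1 : (n + 2) % 2 = n % 2 := by omega
  have h2 : (n + 2) / 2 = n / 2 + 1 := by omega
  unfold w
  rw [h1, h2]
  split <;> ring

lemma w_ge_three (n : ℕ) : 3 ≤ w n := by
  have := one_le_two_pow' (n / 2)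
  unfold w; split <;> nlinarith

lemma w_lt_succ (n : ℕ) : w n < w (n + 1) := by
  rcases Nat.mod_two_eq_zero_or_one n with h | h
  · have h1 : (n + 1) % 2 = 1 := by omega
    have h2 : (n + 1) / 2 = n / 2 := by omega
    have := two_pow_pos' (n / 2)
    unfold w; rw [if_pos h, h1, h2, if_neg (by omega)]; nlinarith
  · have h1 : (n + 1) % 2 = 0 := by omega
    have h2 : (n + 1) / 2 = n / 2 + 1 := by omega
    have := two_pow_pos' (n / 2)
    unfold w; rw [if_neg (by omega), h1, h2, if_pos rfl, pow_succ]; nlinarith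

lemma w_mono : StrictMono w := strictMono_nat_of_lt_succ w_lt_succ

lemma w_even (n : ℕ) (h : 1 ≤ n) : 2 ∣ w n := by
  rcases Nat.mod_two_eq_zero_or_one n with h' | h'
  · have h2 : n / 2 = (n / 2 - 1) + 1 := by omega
    unfold w; rw [if_pos h', h2, pow_succ]
    exact ⟨3 * 2 ^ (n/2-1), by ring⟩
  · unfold w; rw [if_neg (by omega)]
    exact ⟨2 * 2 ^ (n/2), by ring⟩

lemma w_pow_mul (n d : ℕ) : w (n + 2 * d) = 2 ^ d * w n := by
  induction d with
  | zero => simp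
  | succ d ih =>
    have : n + 2 * (d+1) = (n + 2*d) + 2 := by omega
    rw [this, w_two_mul, ih, pow_succ]; ring


def Sset (z : GaussianInt) : Set ℕ :=
  {n : ℕ | |z.re| ≤ 2 ^ (v2 z) * (w n - 2) ∧ |z.im| ≤ 2 ^ (v2 z) * (w n - 2)}

lemma phi_eq (z : GaussianInt) :
    phi z = if l1 z ≤ 2 ^ (v2 z) * (w (sInf (Sset z) + 1) - 3) then sInf (Sset z) + 2 * v2 z
      else sInf (Sset z) + 2 * v2 z + 1 := rfl

lemma Sset_nonempty (z : GaussianInt) : (Sset z).Nonempty := by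
  set M : ℤ := max |z.re| |z.im| with hM
  have hM0 : 0 ≤ M := le_trans (abs_nonneg _) (le_max_left _ _)
  refine ⟨2 * M.toNat, ?_, ?_⟩ <;>
  · show _ ≤ 2 ^ (v2 z) * (w (2 * M.toNat) - 2)
    have hw : w (2 * M.toNat) = 3 * 2 ^ M.toNat := by
      unfold w; rw [if_pos (by omega), Nat.mul_div_cancel_left _ (by norm_num : 0 < 2)]
    have h1 : M.toNat < 2 ^ M.toNat := Nat.lt_two_pow_self
    have h2 : (M : ℤ) ≤ 2 ^ M.toNat := by
      calc (M:ℤ) ≤ (M.toNat : ℤ) := Int.self_le_toNat M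
      _ ≤ ((2 ^ M.toNat : ℕ) : ℤ) := by exact_mod_cast h1.le
      _ = 2 ^ M.toNat := by push_cast; ring
    have h3 : M ≤ w (2 * M.toNat) - 2 := by
      rw [hw]; have := two_pow_pos' M.toNat; linarith
    have h4 : (1:ℤ) ≤ 2 ^ (v2 z) := one_le_two_pow' _
    have h5 : w (2 * M.toNat) - 2 ≤ 2 ^ (v2 z) * (w (2 * M.toNat) - 2) := by
      nlinarith [hM0]
    first
    | calc |z.re| ≤ M := le_max_left _ _
        _ ≤ _ := le_trans h3 h5
    | calc |z.im| ≤ M := le_max_right _ _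
        _ ≤ _ := le_trans h3 h5

lemma phi_le_of (z : GaussianInt) (m : ℕ) (h2j : 2 * v2 z ≤ m)
    (hlinf : max |z.re| |z.im| ≤ 2 ^ (v2 z) * (w (m - 2 * v2 z) - 2))
    (hl1 : l1 z ≤ 2 ^ (v2 z) * (w (m - 2 * v2 z + 1) - 3)) : phi z ≤ m := by
  have hmem : m - 2 * v2 z ∈ Sset z :=
    ⟨le_trans (le_max_left _ _) hlinf, le_trans (le_max_right _ _) hlinf⟩
  have hn : sInf (Sset z) ≤ m - 2 * v2 z := Nat.sInf_le hmem
  rw [phi_eq]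
  split
  · omega
  · rename_i hbr
    have : sInf (Sset z) ≠ m - 2 * v2 z := by
      intro he; rw [he] at hbr; exact hbr hl1
    omega

lemma bounds_of_phi_le (z : GaussianInt) (m : ℕ) (h : phi z ≤ m) :
    2 * v2 z ≤ m ∧ max |z.re| |z.im| ≤ 2 ^ (v2 z) * (w (m - 2 * v2 z) - 2) ∧
      l1 z ≤ 2 ^ (v2 z) * (w (m - 2 * v2 z + 1) - 3) := by
  have hmem : sInf (Sset z) ∈ Sset z := Nat.sInf_mem (Sset_nonempty z)
  set n := sInf (Sset z) with hn
  have hphi := phi_eq z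
  rw [← hn] at hphi
  have h2j : 2 * v2 z ≤ m := by rw [hphi] at h; split at h <;> omega
  refine ⟨h2j, ?_, ?_⟩
  · have hnm : n ≤ m - 2 * v2 z := by rw [hphi] at h; split at h <;> omega
    have hwm : w n - 2 ≤ w (m - 2 * v2 z) - 2 := by
      have := w_mono.monotone hnm; linarith
    have h4 : (0:ℤ) ≤ 2 ^ (v2 z) := (two_pow_pos' _).le
    have := hmem.1; have := hmem.2
    have hle : 2 ^ (v2 z) * (w n - 2) ≤ 2 ^ (v2 z) * (w (m - 2 * v2 z) - 2) :=
      mul_le_mul_of_nonneg_left hwm h4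
    exact le_trans (max_le_iff.mpr ⟨hmem.1, hmem.2⟩) hle
  · rw [hphi] at h
    split at h
    · rename_i hbr
      have hnm : n + 1 ≤ m - 2 * v2 z + 1 := by omega
      have hwm : w (n+1) - 3 ≤ w (m - 2 * v2 z + 1) - 3 := by
        have := w_mono.monotone hnm; linarith
      exact le_trans hbr (mul_le_mul_of_nonneg_left hwm (two_pow_pos' _).le)
    · have hnm : n + 2 ≤ m - 2 * v2 z + 1 := by omega
      have hwm : w (n+2) ≤ w (m - 2 * v2 z + 1) := w_mono.monotone hnm
      have hl1 : l1 z ≤ 2 * max |z.re| |z.im| := by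
        unfold l1
        have := le_max_left |z.re| |z.im|; have := le_max_right |z.re| |z.im|
        linarith
      have hmax : max |z.re| |z.im| ≤ 2 ^ (v2 z) * (w n - 2) :=
        max_le_iff.mpr ⟨hmem.1, hmem.2⟩
      have h2 : l1 z ≤ 2 ^ (v2 z) * (2 * w n - 4) := by
        calc l1 z ≤ 2 * max |z.re| |z.im| := hl1
          _ ≤ 2 * (2 ^ (v2 z) * (w n - 2)) := by linarith
          _ = 2 ^ (v2 z) * (2 * w n - 4) := by ring
      have h3 : 2 * w n - 4 ≤ w (m - 2 * v2 z + 1) - 3 := by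
        rw [← w_two_mul] at *; linarith
      calc l1 z ≤ 2 ^ (v2 z) * (2 * w n - 4) := h2
        _ ≤ _ := mul_le_mul_of_nonneg_left h3 (two_pow_pos' _).le


lemma decomp (z : GaussianInt) (hz : z ≠ 0) :
    ∃ A1 A2 : ℤ, 0 ≤ A2 ∧ A2 ≤ A1 ∧ 1 ≤ A1 ∧ ¬(2 ∣ A1 ∧ 2 ∣ A2) ∧
      max |z.re| |z.im| = 2 ^ (v2 z) * A1 ∧ min |z.re| |z.im| = 2 ^ (v2 z) * A2 := by
  set g : ℕ := Int.gcd z.re z.im with hg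
  have hg0 : g ≠ 0 := by
    rw [hg, Ne, Int.gcd_eq_zero_iff]
    intro ⟨h1, h2⟩
    exact hz (Zsqrtd.ext h1 h2)
  set j := v2 z with hj
  have hdvd : 2 ^ j ∣ g := pow_padicValNat_dvd
  have hndvd : ¬ 2 ^ (j + 1) ∣ g := pow_succ_padicValNat_not_dvd hg0
  have hre : 2 ^ j ∣ z.re.natAbs := hdvd.trans (Nat.gcd_dvd_left _ _)
  have him : 2 ^ j ∣ z.im.natAbs := hdvd.trans (Nat.gcd_dvd_right _ _)
  obtain ⟨ar, har⟩ := hre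
  obtain ⟨ai, hai⟩ := him
  have hnot : ¬(2 ∣ ar ∧ 2 ∣ ai) := by
    rintro ⟨⟨br, hbr⟩, ⟨bi, hbi⟩⟩
    apply hndvd
    apply Nat.dvd_gcd
    · rw [har, hbr]; exact ⟨br, by ring⟩
    · rw [hai, hbi]; exact ⟨bi, by ring⟩
  -- sort
  rcases le_total ai ar with hle | hle
  · refine ⟨(ar : ℤ), (ai : ℤ), by positivity, by exact_mod_cast hle, ?_, ?_, ?_, ?_⟩
    · -- 1 ≤ ar : else ar = 0 and ai ≤ 0 so z = 0
      have : ar ≠ 0 := by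
        rintro rfl
        have : ai = 0 := by omega
        subst this
        simp at har hai
        exact hz (Zsqrtd.ext (by omega) (by omega))
      exact_mod_cast Nat.one_le_iff_ne_zero.mpr this
    · rintro ⟨h1, h2⟩
      exact hnot ⟨by exact_mod_cast h1, by exact_mod_cast h2⟩
    · rw [max_eq_left (by rw [Int.abs_eq_natAbs, Int.abs_eq_natAbs, har, hai]; exact_mod_cast Nat.mul_le_mul_left (2^j) hle)]
      rw [Int.abs_eq_natAbs, har]; push_cast; ring
    · rw [min_eq_right (by rw [Int.abs_eq_natAbs, Int.abs_eq_natAbs, har, hai]; exact_mod_cast Nat.mul_le_mul_left (2^j) hle)]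
      rw [Int.abs_eq_natAbs, hai]; push_cast; ring
  · refine ⟨(ai : ℤ), (ar : ℤ), by positivity, by exact_mod_cast hle, ?_, ?_, ?_, ?_⟩
    · have : ai ≠ 0 := by
        rintro rfl
        have : ar = 0 := by omega
        subst this
        simp at har hai
        exact hz (Zsqrtd.ext (by omega) (by omega))
      exact_mod_cast Nat.one_le_iff_ne_zero.mpr this
    · rintro ⟨h1, h2⟩
      exact hnot ⟨by exact_mod_cast h2, by exact_mod_cast h1⟩
    · rw [max_eq_right (by rw [Int.abs_eq_natAbs, Int.abs_eq_natAbs, har, hai]; exact_mod_cast Nat.mul_le_mul_left (2^j) hle)]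
      rw [Int.abs_eq_natAbs, hai]; push_cast; ring
    · rw [min_eq_left (by rw [Int.abs_eq_natAbs, Int.abs_eq_natAbs, har, hai]; exact_mod_cast Nat.mul_le_mul_left (2^j) hle)]
      rw [Int.abs_eq_natAbs, har]; push_cast; ring


lemma nint_abs_le (x : ℚ) : |x - nint x| ≤ 1 / 2 := by
  have hf : (⌊x⌋ : ℚ) ≤ x := Int.floor_le x
  unfold nint
  split
  · rename_i h
    rw [abs_le]
    constructor <;> push_cast <;> linarith
  · rename_i h
    push_neg at h
    have h1 : x ≤ ⌈x⌉ := Int.le_ceil x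
    have h2 : (⌈x⌉ : ℚ) ≤ ⌊x⌋ + 1 := by exact_mod_cast Int.ceil_le_floor_add_one x
    rw [abs_le]; constructor <;> push_cast <;> linarith

lemma rem_bounds (a b : GaussianInt) (hb : b ≠ 0) :
    2 * |((gr a b).re * b.re + (gr a b).im * b.im)| ≤ b.re ^ 2 + b.im ^ 2 ∧
    2 * |((gr a b).im * b.re - (gr a b).re * b.im)| ≤ b.re ^ 2 + b.im ^ 2 := by
  set N : ℤ := b.re ^ 2 + b.im ^ 2 with hN
  have hN0 : 0 < N := by
    rcases (by intro h; exact hb (Zsqrtd.ext h.1 h.2) : ¬(b.re = 0 ∧ b.im = 0)) with h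
    rcases eq_or_ne b.re 0 with h1 | h1
    · have h2 : b.im ≠ 0 := fun h2 => h ⟨h1, h2⟩
      positivity
    · positivity
  set Pa : ℤ := a.re * b.re + a.im * b.im with hPa
  set Qa : ℤ := a.im * b.re - a.re * b.im with hQa
  set qr : ℤ := nint ((Pa : ℚ) / (N : ℚ)) with hqr
  set qi : ℤ := nint ((Qa : ℚ) / (N : ℚ)) with hqi
  have hgq : gq a b = ⟨qr, qi⟩ := rfl
  have hre : (gr a b).re = a.re - (qr * b.re - qi * b.im) := by
    show (a - gq a b * b).re = _
    rw [Zsqrtd.re_sub, Zsqrtd.re_mul, hgq]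
    show a.re - (qr * b.re + -1 * qi * b.im) = _
    ring
  have him : (gr a b).im = a.im - (qr * b.im + qi * b.re) := by
    show (a - gq a b * b).im = _
    rw [Zsqrtd.im_sub, Zsqrtd.im_mul, hgq]
  have key : ∀ (X q : ℤ), q = nint ((X:ℚ)/(N:ℚ)) → 2 * |X - q * N| ≤ N := by
    intro X q hq
    have h1 : |(X:ℚ)/(N:ℚ) - q| ≤ 1/2 := by rw [hq]; exact nint_abs_le _
    have hNQ : (0:ℚ) < (N:ℚ) := by exact_mod_cast hN0
    have h2 : 2 * |(X:ℚ) - q * N| ≤ N := by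
      have he : (X:ℚ) - q*N = ((X:ℚ)/N - q) * N := by field_simp [mul_comm]
      rw [he, abs_mul, abs_of_pos hNQ]
      nlinarith [abs_nonneg ((X:ℚ)/(N:ℚ) - q)]
    have := h2
    rw [show ((X:ℚ) - q*N) = ((X - q*N : ℤ) : ℚ) by push_cast; ring, ← Int.cast_abs] at this
    exact_mod_cast this
  constructor
  · have hP : (gr a b).re * b.re + (gr a b).im * b.im = Pa - qr * N := by
      rw [hre, him, hPa, hN]; ring
    rw [hP]; exact key Pa qr hqr
  · have hQ : (gr a b).im * b.re - (gr a b).re * b.im = Qa - qi * N := by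
      rw [hre, him, hQa, hN]; ring
    rw [hQ]; exact key Qa qi hqi


lemma abs_add_of_mul_nonneg (a b : ℤ) (h : 0 ≤ a * b) : |a + b| = |a| + |b| := by
  rcases le_or_gt 0 a with ha | ha <;> rcases le_or_gt 0 b with hb | hb
  · rw [abs_of_nonneg ha, abs_of_nonneg hb, abs_of_nonneg (by linarith)]
  · have : a = 0 := by nlinarith
    subst this; simp
  · have : b = 0 := by nlinarith
    subst this; simp
  · rw [abs_of_neg ha, abs_of_neg hb, abs_of_nonpos (by linarith)]; ring

lemma abs_sub_abs_le_abs_add' (a b : ℤ) : |a| - |b| ≤ |a + b| := by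
  have h1 : |a| = |(a + b) + (-b)| := by ring_nf
  calc |a| - |b| = |(a+b) + (-b)| - |b| := by rw [← h1]
    _ ≤ (|a+b| + |(-b)|) - |b| := by gcongr; exact abs_add_le _ _
    _ = |a+b| := by rw [abs_neg]; ring

section signs
variable (zr zi yr yi : ℤ)

lemma hvar_or (h1 : 2*|zr*yr + zi*yi| ≤ yr^2+yi^2) (h2 : 2*|zi*yr - zr*yi| ≤ yr^2+yi^2) :
    2*(max |zr| |zi| * max |yr| |yi| + min |zr| |zi| * min |yr| |yi|) ≤ yr^2+yi^2 ∨
    2*(max |zr| |zi| * min |yr| |yi| + min |zr| |zi| * max |yr| |yi|) ≤ yr^2+yi^2 := by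
  by_cases hs : 0 ≤ (zr*yr) * (zi*yi)
  · have key : 2*(|zr| * |yr| + |zi| * |yi|) ≤ yr^2+yi^2 := by
      rw [← abs_mul, ← abs_mul, ← abs_add_of_mul_nonneg _ _ hs]; exact h1
    rcases le_total |zi| |zr| with hz | hz <;> rcases le_total |yi| |yr| with hy | hy
    · left; rw [max_eq_left hz, max_eq_left hy, min_eq_right hz, min_eq_right hy]; linarith
    · right; rw [max_eq_left hz, max_eq_right hy, min_eq_right hz, min_eq_left hy]; linarith
    · right; rw [max_eq_right hz, max_eq_left hy, min_eq_left hz, min_eq_right hy]; linarith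
    · left; rw [max_eq_right hz, max_eq_right hy, min_eq_left hz, min_eq_left hy]; linarith
  · push_neg at hs
    have hs' : 0 ≤ (zi*yr) * (-(zr*yi)) := by nlinarith
    have key : 2*(|zi| * |yr| + |zr| * |yi|) ≤ yr^2+yi^2 := by
      have := abs_add_of_mul_nonneg _ _ hs'
      rw [abs_neg, abs_mul, abs_mul] at this
      rw [← this]
      have he : zi*yr + -(zr*yi) = zi*yr - zr*yi := by ring
      rw [he]; exact h2
    rcases le_total |zi| |zr| with hz | hz <;> rcases le_total |yi| |yr| with hy | hy
    · right; rw [max_eq_left hz, max_eq_left hy, min_eq_right hz, min_eq_right hy]; linarith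
    · left; rw [max_eq_left hz, max_eq_right hy, min_eq_right hz, min_eq_left hy]; linarith
    · left; rw [max_eq_right hz, max_eq_left hy, min_eq_left hz, min_eq_right hy]; linarith
    · right; rw [max_eq_right hz, max_eq_right hy, min_eq_left hz, min_eq_left hy]; linarith

lemma hdiff_le (h1 : 2*|zr*yr + zi*yi| ≤ yr^2+yi^2) (h2 : 2*|zi*yr - zr*yi| ≤ yr^2+yi^2) :
    2*(max |zr| |zi| * max |yr| |yi| - min |zr| |zi| * min |yr| |yi|) ≤ yr^2+yi^2 := by
  rcases le_total |zi| |zr| with hz | hz <;> rcases le_total |yi| |yr| with hy | hy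
  · rw [max_eq_left hz, max_eq_left hy, min_eq_right hz, min_eq_right hy]
    have : |zr| * |yr| - |zi| * |yi| ≤ |zr*yr + zi*yi| := by
      rw [← abs_mul, ← abs_mul]; exact abs_sub_abs_le_abs_add' _ _
    linarith
  · rw [max_eq_left hz, max_eq_right hy, min_eq_right hz, min_eq_left hy]
    have : |zr| * |yi| - |zi| * |yr| ≤ |zi*yr - zr*yi| := by
      rw [← abs_mul, ← abs_mul, ← abs_neg (zi*yr - zr*yi)]
      have he : -(zi*yr - zr*yi) = zr*yi + -(zi*yr) := by ring
      rw [he]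
      calc |zr*yi| - |zi*yr| = |zr*yi| - |(-(zi*yr))| := by rw [abs_neg]
        _ ≤ _ := abs_sub_abs_le_abs_add' _ _
    linarith
  · rw [max_eq_right hz, max_eq_left hy, min_eq_left hz, min_eq_right hy]
    have : |zi| * |yr| - |zr| * |yi| ≤ |zi*yr - zr*yi| := by
      rw [← abs_mul, ← abs_mul]
      have he : zi*yr - zr*yi = zi*yr + -(zr*yi) := by ring
      rw [he]
      calc |zi*yr| - |zr*yi| = |zi*yr| - |(-(zr*yi))| := by rw [abs_neg]
        _ ≤ _ := abs_sub_abs_le_abs_add' _ _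
    linarith
  · rw [max_eq_right hz, max_eq_right hy, min_eq_left hz, min_eq_left hy]
    have : |zi| * |yi| - |zr| * |yr| ≤ |zr*yr + zi*yi| := by
      rw [← abs_mul, ← abs_mul]
      have he : zr*yr + zi*yi = zi*yi + zr*yr := by ring
      rw [he]; exact abs_sub_abs_le_abs_add' _ _
    linarith

lemma hnorm_le (hN : 1 ≤ yr^2+yi^2)
    (h1 : 2*|zr*yr + zi*yi| ≤ yr^2+yi^2) (h2 : 2*|zi*yr - zr*yi| ≤ yr^2+yi^2) :
    2*(zr^2+zi^2) ≤ yr^2+yi^2 := by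
  set N : ℤ := yr^2+yi^2 with hNd
  have hid : (zr*yr + zi*yi)^2 + (zi*yr - zr*yi)^2 = (zr^2+zi^2) * N := by rw [hNd]; ring
  have e1 : (2*|zr*yr + zi*yi|)^2 ≤ N^2 := by
    have h0 : 0 ≤ 2*|zr*yr + zi*yi| := by positivity
    nlinarith
  have e2 : (2*|zi*yr - zr*yi|)^2 ≤ N^2 := by
    have h0 : 0 ≤ 2*|zi*yr - zr*yi| := by positivity
    nlinarith
  rw [mul_pow, sq_abs] at e1 e2
  have e3 : 4 * ((zr^2+zi^2) * N) ≤ 2 * N^2 := by rw [← hid]; linarith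
  have e4 : (2*(zr^2+zi^2)) * N ≤ N * N := by nlinarith
  exact le_of_mul_le_mul_right (by linarith [e4]) (by linarith : (0:ℤ) < N)

end signs


lemma arith (k d : ℕ) (A1 A2 C1 C2 : ℤ)
    (hA2 : 0 ≤ A2) (hA12 : A2 ≤ A1) (hA1 : 1 ≤ A1)
    (hC2 : 0 ≤ C2) (hC12 : C2 ≤ C1) (hC1 : 1 ≤ C1)
    (hAodd : ¬(2 ∣ A1 ∧ 2 ∣ A2)) (hCodd : ¬(2 ∣ C1 ∧ 2 ∣ C2))
    (hC1b : C1 ≤ w k - 2) (hC12b : C1 + C2 ≤ w (k+1) - 3)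
    (H1 : 2*(A1^2+A2^2) ≤ 2^d * 2^d * (C1^2+C2^2))
    (Hvar : 2*(A1*C1+A2*C2) ≤ 2^d * (C1^2+C2^2) ∨ 2*(A1*C2+A2*C1) ≤ 2^d * (C1^2+C2^2))
    (Hdiff : 2*(A1*C1 - A2*C2) ≤ 2^d * (C1^2+C2^2))
    (hneg : (k = 0 ∧ d = 0) ∨
      (1 ≤ k + 2*d ∧ (w (k+2*d-1) - 1 ≤ A1 ∨ 2^d * w k - 2 ≤ A1 + A2))) :
    False := by
  set D : ℤ := 2^d with hD
  have hD1 : 1 ≤ D := two_pow_pos' d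
  have hD0 : 0 ≤ D := by linarith
  have hC1sq : 1*1 ≤ C1*C1 := mul_le_mul hC1 hC1 (by norm_num) (by linarith)
  have hA1sq : 1*1 ≤ A1*A1 := mul_le_mul hA1 hA1 (by norm_num) (by linarith)
  have hNC : 1 ≤ C1^2+C2^2 := by linarith [hC1sq, sq_nonneg C2]
  have K1 : 2*A1 ≤ D*(C1+C2) := by
    rcases Hvar with hA | hB
    · have e3 : 0 ≤ D*(C2*(C1-C2)) := mul_nonneg hD0 (mul_nonneg hC2 (by linarith))
      have e4 : 0 ≤ A2*C2 := mul_nonneg hA2 hC2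
      have h : (2*A1)*C1 ≤ (D*(C1+C2))*C1 := by linarith [hA, e3, e4]
      exact le_of_mul_le_mul_right h (by linarith)
    · have e1 := mul_le_mul_of_nonneg_left Hdiff (show (0:ℤ) ≤ C1 by linarith)
      have e2 := mul_le_mul_of_nonneg_left hB hC2
      have h : (2*A1)*(C1^2+C2^2) ≤ (D*(C1+C2))*(C1^2+C2^2) := by linarith [e1, e2]
      exact le_of_mul_le_mul_right h (by linarith)
  rcases hneg with ⟨hk0, hd0⟩ | ⟨hkd, hcase⟩
  · subst hk0; subst hd0
    rw [w0] at hC1b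
    rw [w1] at hC12b
    have hC1e : C1 = 1 := by omega
    have hC2e : C2 = 0 := by omega
    rw [hC1e, hC2e] at H1
    have hDe : D = 1 := by rw [hD]; norm_num
    rw [hDe] at H1
    linarith [H1, hA1sq, sq_nonneg A2]
  · rcases hcase with hii | hiii
    · -- case ii
      rcases Nat.eq_zero_or_pos k with hk0 | hk1
      · subst hk0
        obtain ⟨e, rfl⟩ : ∃ e, d = e + 1 := ⟨d-1, by omega⟩
        have hw : w (0 + 2*(e+1) - 1) = 2^e * w 1 := by
          rw [show 0 + 2*(e+1) - 1 = 1 + 2*e by omega, w_pow_mul]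
        rw [hw, w1] at hii
        rw [show (2:ℤ)^e * 4 = 2*(2*2^e) by ring] at hii
        rw [w1] at hC12b
        have hDe : D = 2 * 2^e := by rw [hD, pow_succ]; ring
        have hX : (1:ℤ) ≤ 2^e := two_pow_pos' e
        have h2 : D*(C1+C2) ≤ D*1 := mul_le_mul_of_nonneg_left (by omega) hD0
        linarith [K1, hii, h2, hX, hDe]
      · have hw : w (k + 2*d - 1) = 2^d * w (k-1) := by
          rw [show k + 2*d - 1 = (k-1) + 2*d by omega, w_pow_mul]
        rw [hw, ← hD] at hii
        have hx : w (k+1) = 2 * w (k-1) := by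
          rw [show k+1 = (k-1)+2 by omega, w_two_mul]
        rw [hx] at hC12b
        have h2 : D*(C1+C2) ≤ D*(2*w (k-1) - 3) :=
          mul_le_mul_of_nonneg_left (by linarith) hD0
        linarith [K1, hii, h2, hD1]
    · -- case iii
      rcases Nat.eq_zero_or_pos k with hk0 | hk1
      · subst hk0
        have hd1 : 1 ≤ d := by omega
        rw [w0] at hC1b hiii
        rw [w1] at hC12b
        have hC1e : C1 = 1 := by omega
        have hC2e : C2 = 0 := by omega
        rw [hC1e, hC2e] at H1
        have hD2 : (2:ℤ) ≤ D := by
          rw [hD]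
          calc (2:ℤ) = 2^1 := by norm_num
          _ ≤ 2^d := pow_le_pow_right₀ (by norm_num) hd1
        have hSS : 3*D - 2 ≤ A1 + A2 := by linarith [hiii]
        have hq : (3*D-2)*(3*D-2) ≤ (A1+A2)*(A1+A2) :=
          mul_le_mul hSS hSS (by linarith) (by linarith)
        have hDsq : 2*D ≤ D*D := by
          have := mul_le_mul_of_nonneg_right hD2 hD0
          linarith
        linarith [hq, sq_nonneg (A1 - A2), H1, hDsq, hD2]
      · -- main case k ≥ 1
        have hv_even : 2 ∣ w k := w_even k hk1
        have huv : w (k-1) + 1 ≤ w k := by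
          have := w_lt_succ (k-1)
          rw [show (k-1)+1 = k by omega] at this
          linarith
        have hx : w (k+1) = 2 * w (k-1) := by
          rw [show k+1 = (k-1)+2 by omega, w_two_mul]
        rw [hx] at hC12b
        have hu3 : 3 ≤ w (k-1) := w_ge_three _
        set v : ℤ := w k with hv
        set u : ℤ := w (k-1) with hu
        set S : ℤ := A1 + A2 with hSdef
        set E : ℤ := A1 - A2 with hEdef
        have hE0 : 0 ≤ E := by omega
        have hS : D*v - 2 ≤ S := hiii
        have hSDC1 : D*C1 + (2*D - 2) ≤ S := by
          have h := mul_le_mul_of_nonneg_left (show C1 ≤ v - 2 by linarith) hD0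
          linarith [h, hS]
        have H1' : S^2 + E^2 ≤ (D*C1)^2 + (D*C2)^2 := by
          have eq1 : S^2 + E^2 = 2*(A1^2+A2^2) := by rw [hSdef, hEdef]; ring
          have eq2 : (D*C1)^2+(D*C2)^2 = D*D*(C1^2+C2^2) := by ring
          linarith [H1, eq1, eq2]
        have hSnn : 0 ≤ S := by omega
        have hDC1S : D*C1 ≤ S := by linarith
        have hDC1nn : 0 ≤ D*C1 := mul_nonneg hD0 (by linarith)
        have hsq : (D*C1)*(D*C1) ≤ S*S := mul_self_le_mul_self hDC1nn hDC1S
        have hEsq : E^2 ≤ (D*C2)^2 := by linarith [H1', hsq]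
        have hDC2nn : 0 ≤ D*C2 := mul_nonneg hD0 hC2
        have hE_le : E ≤ D*C2 := by
          by_contra hc
          push_neg at hc
          have h1 : D*C2 + 1 ≤ E := by omega
          have h2 : (D*C2+1)*(D*C2+1) ≤ E*E :=
            mul_le_mul h1 h1 (by linarith) (by linarith)
          linarith [hEsq, h2, hDC2nn]
        rcases Hvar with hA | hB
        · -- variant A
          have eSE : 2*(A1*C1+A2*C2) = S*(C1+C2) + E*(C1-C2) := by
            rw [hSdef, hEdef]; ring
          have step1 : S*(C1+C2) ≤ D*(C1^2+C2^2) := by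
            linarith [hA, eSE, mul_nonneg hE0 (sub_nonneg.mpr hC12)]
          have e3 : 0 ≤ D*(C2*(C1-C2)) := mul_nonneg hD0 (mul_nonneg hC2 (by linarith))
          have step2 : S*(C1+C2) ≤ ((D*C1))*(C1+C2) := by linarith [step1, e3]
          have step3 : S ≤ D*C1 := le_of_mul_le_mul_right step2 (by linarith)
          have hDeq : D = 1 := le_antisymm (by linarith) hD1
          rw [hDeq] at step3 hSDC1 hS hA
          have hSC1 : S = C1 := by linarith
          have hC1v : C1 = v - 2 := by linarith
          have e2 : S*(C1+C2) = C1*(C1+C2) := by rw [hSC1]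
          have hfac : (C2 + E)*(C1 - C2) ≤ 0 := by linarith [hA, eSE, e2]
          have hfac0 : (C2 + E)*(C1 - C2) = 0 :=
            le_antisymm hfac (mul_nonneg (by linarith) (by linarith))
          rcases mul_eq_zero.mp hfac0 with h | h
          · exact hCodd ⟨⟨A1, by omega⟩, by omega⟩
          · omega
        · -- variant B
          have eSE : 2*(A1*C2+A2*C1) = S*(C1+C2) - E*(C1-C2) := by
            rw [hSdef, hEdef]; ring
          have key : (S - D*C1)*(C1+C2) ≤ (E - D*C2)*(C1-C2) := by linarith [hB, eSE]
          have hRHS : (E - D*C2)*(C1-C2) ≤ 0 :=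
            mul_nonpos_of_nonpos_of_nonneg (by linarith) (by linarith)
          have hLHS : (2*D-2)*1 ≤ (S - D*C1)*(C1+C2) := by
            calc (2*D-2)*1 ≤ (2*D-2)*(C1+C2) :=
                  mul_le_mul_of_nonneg_left (by linarith) (by linarith)
            _ ≤ (S - D*C1)*(C1+C2) := mul_le_mul_of_nonneg_right (by linarith) (by linarith)
          have hDeq : D = 1 := le_antisymm (by linarith) hD1
          rw [hDeq] at key hSDC1 hS hE_le hRHS
          have hfac0 : (S - 1*C1)*(C1+C2) = 0 :=
            le_antisymm (le_trans key hRHS) (mul_nonneg (by linarith) (by linarith))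
          have hSC1 : S = C1 := by
            rcases mul_eq_zero.mp hfac0 with h | h
            · linarith
            · linarith
          have hC1v : C1 = v - 2 := by linarith
          have hkey0 : (E - 1*C2)*(C1-C2) = 0 := by
            refine le_antisymm hRHS ?_
            rw [← hfac0]; exact key
          rcases mul_eq_zero.mp hkey0 with h | h
          · omega
          · omega


lemma sq_decomp (x y : ℤ) : x^2 + y^2 = (max |x| |y|)^2 + (min |x| |y|)^2 := by
  rcases le_total |x| |y| with h | h
  · rw [max_eq_right h, min_eq_left h, sq_abs, sq_abs]; ring
  · rw [max_eq_left h, min_eq_right h, sq_abs, sq_abs]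

theorem stmt10 (a b r : GaussianInt) (ha : a ≠ 0) (hb : b ≠ 0) (hr : r = gr a b)
    (hr0 : r ≠ 0) (hv : v2 r ≤ v2 b) :
    phi r < phi b := by
  by_contra hcon
  push_neg at hcon
  obtain ⟨d, hJd⟩ : ∃ d, v2 b = v2 r + d := ⟨v2 b - v2 r, by omega⟩
  obtain ⟨A1, A2, hA2, hA12, hA1, hAodd, ha1, ha2⟩ := decomp r hr0
  obtain ⟨C1, C2, hC2, hC12, hC1, hCodd, hc1, hc2⟩ := decomp b hb
  obtain ⟨hPb, hQb⟩ := rem_bounds a b hb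
  rw [← hr] at hPb hQb
  have hPj : (0:ℤ) < 2^(v2 r) := two_pow_pos' _
  have hPd : (0:ℤ) < 2^d := two_pow_pos' _
  have hPj1 : (1:ℤ) ≤ 2^(v2 r) := hPj
  have hPd1 : (1:ℤ) ≤ 2^d := hPd
  have hJpow : (2:ℤ)^(v2 b) = 2^(v2 r) * 2^d := by rw [hJd, pow_add]
  have hNdec : b.re^2 + b.im^2 = (2^(v2 r)*2^d*C1)^2 + (2^(v2 r)*2^d*C2)^2 := by
    rw [sq_decomp b.re b.im, hc1, hc2, hJpow]
  have hXY1 : (1:ℤ)*1 ≤ 2^(v2 r) * 2^d := mul_le_mul hPj1 hPd1 (by norm_num) (by linarith)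
  have hXYC1 : (1:ℤ)*1 ≤ (2^(v2 r) * 2^d) * C1 :=
    mul_le_mul (by linarith) hC1 (by norm_num) (by linarith)
  have hN1 : 1 ≤ b.re^2 + b.im^2 := by
    rw [hNdec]
    have hsq : (1:ℤ)*1 ≤ (2^(v2 r) * 2^d * C1) * (2^(v2 r) * 2^d * C1) :=
      mul_le_mul (by linarith) (by linarith) (by norm_num) (by linarith)
    nlinarith [hsq, sq_nonneg (2^(v2 r)*2^d*C2)]
  -- unscaled inequalities
  have Hnorm0 : 2*(r.re^2+r.im^2) ≤ b.re^2+b.im^2 := hnorm_le _ _ _ _ hN1 hPb hQb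
  have Hvar0 := hvar_or r.re r.im b.re b.im hPb hQb
  have Hdiff0 := hdiff_le r.re r.im b.re b.im hPb hQb
  rw [ha1, ha2, hc1, hc2, hJpow, hNdec] at Hvar0 Hdiff0
  rw [sq_decomp r.re r.im, ha1, ha2, hNdec] at Hnorm0
  -- scaled inequalities
  have H1s : 2*(A1^2+A2^2) ≤ 2^d * 2^d * (C1^2+C2^2) := by
    have hmul : (2*(A1^2+A2^2)) * (2^(v2 r)*2^(v2 r)) ≤
        (2^d*2^d*(C1^2+C2^2)) * (2^(v2 r)*2^(v2 r)) := by linarith [Hnorm0]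
    exact le_of_mul_le_mul_right hmul (by positivity)
  have Hvars : 2*(A1*C1+A2*C2) ≤ 2^d * (C1^2+C2^2) ∨
      2*(A1*C2+A2*C1) ≤ 2^d * (C1^2+C2^2) := by
    rcases Hvar0 with h | h
    · left
      have hmul : (2*(A1*C1+A2*C2)) * (2^(v2 r)*2^(v2 r)*2^d) ≤
          (2^d*(C1^2+C2^2)) * (2^(v2 r)*2^(v2 r)*2^d) := by linarith [h]
      exact le_of_mul_le_mul_right hmul (by positivity)
    · right
      have hmul : (2*(A1*C2+A2*C1)) * (2^(v2 r)*2^(v2 r)*2^d) ≤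
          (2^d*(C1^2+C2^2)) * (2^(v2 r)*2^(v2 r)*2^d) := by linarith [h]
      exact le_of_mul_le_mul_right hmul (by positivity)
  have Hdiffs : 2*(A1*C1 - A2*C2) ≤ 2^d * (C1^2+C2^2) := by
    have hmul : (2*(A1*C1 - A2*C2)) * (2^(v2 r)*2^(v2 r)*2^d) ≤
        (2^d*(C1^2+C2^2)) * (2^(v2 r)*2^(v2 r)*2^d) := by linarith [Hdiff0]
    exact le_of_mul_le_mul_right hmul (by positivity)
  -- phi bounds for b
  obtain ⟨h2J, hlinfb, hl1b⟩ := bounds_of_phi_le b (phi b) le_rfl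
  set m := phi b with hm
  set k := m - 2*(v2 b) with hk
  have hmk : m = k + 2*(v2 b) := by omega
  have hC1b : C1 ≤ w k - 2 := by
    rw [hc1] at hlinfb
    exact (mul_le_mul_iff_right₀ (two_pow_pos' (v2 b))).mp hlinfb
  have hC12b : C1 + C2 ≤ w (k+1) - 3 := by
    have he : l1 b = 2^(v2 b) * (C1 + C2) := by
      show |b.re| + |b.im| = _
      rw [← max_add_min |b.re| |b.im|, hc1, hc2]; ring
    rw [he] at hl1b
    exact (mul_le_mul_iff_right₀ (two_pow_pos' (v2 b))).mp hl1b
  -- negation side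
  have hneg : (k = 0 ∧ d = 0) ∨
      (1 ≤ k + 2*d ∧ (w (k+2*d-1) - 1 ≤ A1 ∨ 2^d * w k - 2 ≤ A1 + A2)) := by
    by_cases h0 : k = 0 ∧ d = 0
    · exact Or.inl h0
    · right
      have hkd : 1 ≤ k + 2*d := by omega
      have hm1 : 2*(v2 r) ≤ m - 1 := by omega
      have hnle : ¬ phi r ≤ m - 1 := by
        intro h
        have h2 : m ≤ phi r := hcon
        omega
      have hdisj : ¬(max |r.re| |r.im| ≤ 2 ^ (v2 r) * (w ((m-1) - 2*(v2 r)) - 2)) ∨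
          ¬(l1 r ≤ 2 ^ (v2 r) * (w ((m-1) - 2*(v2 r) + 1) - 3)) := by
        by_contra hno
        push_neg at hno
        exact hnle (phi_le_of r (m-1) hm1 hno.1 hno.2)
      refine ⟨hkd, ?_⟩
      have hidx1 : (m-1) - 2*(v2 r) = k + 2*d - 1 := by omega
      have hidx2 : (m-1) - 2*(v2 r) + 1 = k + 2*d := by omega
      rcases hdisj with h | h
      · left
        rw [hidx1] at h
        push_neg at h
        rw [ha1] at h
        have h2 := (mul_lt_mul_iff_right₀ hPj).mp h
        linarith
      · right
        rw [hidx2] at h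
        push_neg at h
        have he : l1 r = 2^(v2 r) * (A1 + A2) := by
          show |r.re| + |r.im| = _
          rw [← max_add_min |r.re| |r.im|, ha1, ha2]; ring
        rw [he, w_pow_mul k d] at h
        have h2 := (mul_lt_mul_iff_right₀ hPj).mp h
        linarith
  exact arith k d A1 A2 C1 C2 hA2 hA12 hA1 hC2 hC12 hC1 hAodd hCodd hC1b hC12b
    H1s Hvars Hdiffs hneg
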